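/- Let A be a unital C*-algebra, p : ℝ → A a continuously differentiable path of orthogonal projections (p(t)* = p(t), p(t)² = p(t) for all t), and W : ℝ → A a differentiable solution of the equation W'(t) = [p'(t), p(t)]·W(t) with W(0) = 1. Then W(t) is unitary for every t ∈ ℝ: W(t)* W(t) = W(t) W(t)* = 1. -/

import Mathlib

open Set

/-- **The adiabatic propagator is unitary.**
Let `A` be a unital C*-algebra, `p : ℝ → A` a continuously differentiable path of
orthogonal projections, and `W : ℝ → A` a differentiable solution of the parallel
transport equation `W'(t) = [p'(t), p(t)]·W(t)` with `W(0) = 1`.  Then `W(t)` is unitary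
for every `t`: `W(t)* W(t) = W(t) W(t)* = 1`. -/
theorem adiabatic_propagator_unitary
    {A : Type*} [CStarAlgebra A]
    (p : ℝ → A) (hp : ContDiff ℝ 1 p)
    (hsa : ∀ t : ℝ, star (p t) = p t) (hidem : ∀ t : ℝ, p t * p t = p t)
    (W : ℝ → A)
    (hW : ∀ t : ℝ, HasDerivAt W ((deriv p t * p t - p t * deriv p t) * W t) t)
    (hW0 : W 0 = 1) :
    ∀ t : ℝ, star (W t) * W t = 1 ∧ W t * star (W t) = 1 := by
  set G : ℝ → A := fun t => deriv p t * p t - p t * deriv p t with hG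
  have hpd : ∀ t : ℝ, HasDerivAt p (deriv p t) t :=
    fun t => ((hp.differentiable one_ne_zero) t).hasDerivAt
  -- the derivative of p is self-adjoint
  have hds : ∀ t : ℝ, star (deriv p t) = deriv p t := by
    intro t
    have h1 : HasDerivAt (fun s => star (p s)) (star (deriv p t)) t := (hpd t).star
    have h2 : (fun s => star (p s)) = p := funext hsa
    rw [h2] at h1
    exact h1.unique (hpd t)
  -- the generator is skew-adjoint
  have hGstar : ∀ t : ℝ, star (G t) = -G t := by
    intro t
    simp only [hG, star_sub, star_mul, hsa, hds]
    abel
  -- derivative of star W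
  have hY : ∀ t : ℝ, HasDerivAt (fun s => star (W s)) (-(star (W t) * G t)) t := by
    intro t
    have : HasDerivAt (fun s => star (W s)) (star (G t * W t)) t := (hW t).star
    simpa only [star_mul, hGstar, mul_neg, neg_mul] using this
  -- first identity : star W * W = 1
  have h1 : ∀ t : ℝ, star (W t) * W t = 1 := by
    have hd : ∀ t : ℝ, HasDerivAt (fun s => star (W s) * W s) 0 t := by
      intro t
      have heq : (0:A) = -(star (W t) * G t) * W t + star (W t) * (G t * W t) := by
        noncomm_ring
      rw [heq]
      exact (hY t).mul (hW t)
    intro t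
    have hconst := is_const_of_deriv_eq_zero
      (f := fun s => star (W s) * W s)
      (fun s => (hd s).differentiableAt) (fun s => (hd s).deriv) t 0
    rw [hconst, hW0, star_one, one_mul]
  -- second identity, using ODE uniqueness
  have h2 : ∀ t : ℝ, W t * star (W t) = 1 := by
    intro t₁
    set a : ℝ := min 0 t₁ - 1 with ha
    set b : ℝ := max 0 t₁ + 1 with hb
    have h0ab : (0 : ℝ) ∈ Ioo a b := by
      constructor
      · have := min_le_left (0:ℝ) t₁
        simp only [ha]; linarith
      · have := le_max_left (0:ℝ) t₁
        simp only [hb]; linarith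
    have ht₁ab : t₁ ∈ Icc a b := by
      constructor
      · have : min 0 t₁ ≤ t₁ := min_le_right _ _
        simp only [ha]; linarith
      · have : t₁ ≤ max 0 t₁ := le_max_right _ _
        simp only [hb]; linarith
    -- continuity and bound for G
    have hGcont : Continuous G := by
      have hdc : Continuous (deriv p) := hp.continuous_deriv le_rfl
      exact (hdc.mul hp.continuous).sub (hp.continuous.mul hdc)
    obtain ⟨C, hC⟩ : ∃ C, ∀ s ∈ Icc a b, ‖G s‖ ≤ C :=
      isCompact_Icc.exists_bound_of_continuousOn hGcont.continuousOn
    have hC0 : 0 ≤ C := le_trans (norm_nonneg _) (hC a ⟨le_rfl, le_of_lt (h0ab.1.trans h0ab.2)⟩)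
    -- clamp
    set c : ℝ → ℝ := fun s => max a (min s b) with hc
    have hcmem : ∀ s, c s ∈ Icc a b := by
      intro s
      refine ⟨le_max_left _ _, max_le (le_of_lt (h0ab.1.trans h0ab.2)) (min_le_right _ _)⟩
    have hceq : ∀ s ∈ Ioo a b, c s = s := by
      intro s hs
      simp only [hc]
      rw [min_eq_left hs.2.le, max_eq_right hs.1.le]
    set v : ℝ → A → A := fun s x => G (c s) * x - x * G (c s) with hv
    have hlip : ∀ s, LipschitzWith (2 * C).toNNReal (v s) := by
      intro s
      apply LipschitzWith.of_dist_le_mul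
      intro x y
      rw [dist_eq_norm, dist_eq_norm]
      have : v s x - v s y = G (c s) * (x - y) - (x - y) * G (c s) := by
        simp only [hv]; noncomm_ring
      rw [this]
      have hb1 : ‖G (c s) * (x - y) - (x - y) * G (c s)‖
          ≤ ‖G (c s)‖ * ‖x - y‖ + ‖x - y‖ * ‖G (c s)‖ :=
        le_trans (norm_sub_le _ _) (add_le_add (norm_mul_le _ _) (norm_mul_le _ _))
      have hgb : ‖G (c s)‖ ≤ C := hC _ (hcmem s)
      have hcoe : ((2 * C).toNNReal : ℝ) = 2 * C := Real.coe_toNNReal _ (by positivity)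
      rw [hcoe]
      nlinarith [norm_nonneg (x - y), norm_nonneg (G (c s))]
    set Z : ℝ → A := fun s => W s * star (W s) with hZ
    have hZd : ∀ s ∈ Ioo a b, HasDerivAt Z (v s (Z s)) s := by
      intro s hs
      have h := (hW s).mul (hY s)
      have : v s (Z s) = G s * W s * star (W s) + W s * -(star (W s) * G s) := by
        simp only [hv, hZ, hceq s hs]; noncomm_ring
      rw [this]
      exact h
    have hOd : ∀ s ∈ Ioo a b, HasDerivAt (fun _ : ℝ => (1 : A)) (v s 1) s := by
      intro s hs
      have : v s 1 = 0 := by simp [hv]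
      rw [this]
      exact hasDerivAt_const _ _
    have := ODE_solution_unique_of_mem_Icc
      (K := (2 * C).toNNReal) (v := v) (s := fun _ => univ) (f := Z)
      (g := fun _ : ℝ => (1 : A)) (t₀ := 0) (a := a) (b := b)
      (fun s _ => (hlip s).lipschitzOnWith)
      h0ab
      (fun s hs => ((hW s).mul (hY s)).continuousAt.continuousWithinAt)
      hZd (fun _ _ => trivial)
      continuousOn_const
      hOd (fun _ _ => trivial)
      (by simp [hZ, hW0])
    exact this ht₁ab
  exact fun t => ⟨h1 t, h2 t⟩
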